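/- Let σ be a positive n×n matrix measure on R with finite moments and infinitely many growth points. Apply the Gram–Schmidt procedure in L_2(R,σ) to the sequence of vector polynomials e_1, e_2, ..., where e_{nk+i}(z) = z^k e_i, discarding (and recording) vectors of zero norm. If at step h+1 the procedure produces a nonzero null vector polynomial q of height h, then for every l ≥ 1 the vector produced at step h+1+nl also has zero norm. -/

import Mathlib

open Polynomial

/-- The height of an `n`-dimensional vector polynomial (0-indexed components):
`h(r) = max_j (n · deg R_j + j)`, with `deg 0 = ⊥` and `h(0) = ⊥`. -/
noncomputable def height {n : ℕ} (r : Fin n → Polynomial ℂ) : WithBot ℕ :=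
  Finset.univ.sup fun j : Fin n => WithBot.map (fun d => n * d + (j : ℕ)) (r j).degree

/-- The vector polynomial `e_{nk+i}(z) = z^k e_i`; in 0-indexed form `eVP n s = z^(s/n) e_(s%n)`,
corresponding to the 1-indexed `e_{s+1}`. -/
noncomputable def eVP (n : ℕ) (s : ℕ) : Fin n → Polynomial ℂ :=
  fun j => if (j : ℕ) = s % n then X ^ (s / n) else 0

/-- A positive `n×n` matrix measure `σ` on `ℝ` with all moments finite, encoded through the
(possibly degenerate) sesquilinear form `B f g = ∫_ℝ ⟨f(t), dσ(t) g(t)⟩` it induces on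
`n`-dimensional vector polynomials (antilinear in the first argument). The axiom `mul_symm`
expresses that multiplication by the real variable `t` is symmetric for the form. -/
structure MatMeasureForm (n : ℕ) where
  B : (Fin n → Polynomial ℂ) → (Fin n → Polynomial ℂ) → ℂ
  add_right : ∀ f g h, B f (g + h) = B f g + B f h
  smul_right : ∀ (c : ℂ) f g, B f (c • g) = c * B f g
  conj_symm : ∀ f g, B g f = (starRingEnd ℂ) (B f g)
  nonneg : ∀ f, 0 ≤ (B f f).re
  mul_symm : ∀ f g, B (fun j => X * f j) g = B f (fun j => X * g j)


namespace MatMeasureForm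
variable {n : ℕ} (M : MatMeasureForm n)

lemma B_zero_right (f : Fin n → Polynomial ℂ) : M.B f 0 = 0 := by
  have := M.smul_right 0 f 0
  simpa using this

lemma B_add_left (f g k : Fin n → Polynomial ℂ) : M.B (f + g) k = M.B f k + M.B g k := by
  rw [M.conj_symm, M.add_right, map_add, ← M.conj_symm, ← M.conj_symm]

lemma B_smul_left (c : ℂ) (f k : Fin n → Polynomial ℂ) :
    M.B (c • f) k = (starRingEnd ℂ) c * M.B f k := by
  rw [M.conj_symm, M.smul_right, map_mul, ← M.conj_symm]

lemma B_sub_right (f g k : Fin n → Polynomial ℂ) : M.B f (g - k) = M.B f g - M.B f k := by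
  have : g - k = g + (-1 : ℂ) • k := by simp [sub_eq_add_neg]
  rw [this, M.add_right, M.smul_right]; ring

lemma B_sum_right {ι : Type*} (f : Fin n → Polynomial ℂ) (s : Finset ι)
    (g : ι → (Fin n → Polynomial ℂ)) :
    M.B f (∑ i ∈ s, g i) = ∑ i ∈ s, M.B f (g i) := by
  classical
  induction s using Finset.induction with
  | empty => simpa using M.B_zero_right f
  | insert a s hx ih => rw [Finset.sum_insert hx, M.add_right, ih, Finset.sum_insert hx]

lemma B_null_right (q : Fin n → Polynomial ℂ) (hq : M.B q q = 0)
    (f : Fin n → Polynomial ℂ) : M.B f q = 0 := by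
  set a := M.B f q with ha
  by_contra hne
  have hkey : ∀ N : ℝ, 0 ≤ (M.B f f).re - 2 * (N * Complex.normSq a) := by
    intro N
    set t : ℂ := -(N : ℂ) * (starRingEnd ℂ) a with ht
    have hE : M.B (f + t • q) (f + t • q)
        = M.B f f + (starRingEnd ℂ) t * (starRingEnd ℂ) a + t * a := by
      rw [M.add_right, M.B_add_left, M.B_add_left, M.B_smul_left, M.B_smul_left,
        M.smul_right, M.smul_right, hq, M.conj_symm f q]
      ring_nf
      rw [← ha]
    have h2 := M.nonneg (f + t • q)
    rw [hE] at h2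
    have hre : (M.B f f + (starRingEnd ℂ) t * (starRingEnd ℂ) a + t * a).re
        = (M.B f f).re - 2 * (N * Complex.normSq a) := by
      rw [ht]
      simp [Complex.add_re, Complex.mul_re, Complex.normSq_apply]
      ring
    rw [hre] at h2
    exact h2
  have hpos : 0 < Complex.normSq a := Complex.normSq_pos.mpr hne
  have := hkey (((M.B f f).re + 1) / (2 * Complex.normSq a))
  rw [div_mul_eq_mul_div, mul_comm (2:ℝ) (Complex.normSq a)] at this
  rw [mul_div_assoc] at this
  have h3 : Complex.normSq a / (Complex.normSq a * 2) = 1/2 := by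
    field_simp
  rw [h3] at this; linarith

lemma B_pow_symm (l : ℕ) : ∀ f g : Fin n → Polynomial ℂ,
    M.B (fun j => X ^ l * f j) g = M.B f (fun j => X ^ l * g j) := by
  induction l with
  | zero => intro f g; simp
  | succ l ih =>
    intro f g
    have e1 : (fun j => X ^ (l+1) * f j) = (fun j => X ^ l * (X * f j)) := by
      funext j; ring
    have e2 : (fun j => X ^ (l+1) * g j) = (fun j => X * (X ^ l * g j)) := by
      funext j; ring
    rw [e1, e2, ih (fun j => X * f j) g, M.mul_symm]

end MatMeasureForm

/-- Gram–Schmidt with discarded null vectors: if at step `h+1` the procedure produced a nonzero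
null vector polynomial `q` of height `h`, and `{p_i}` are the orthonormal vectors obtained so far
(all of height `< h + n·l`, and spanning together with the null polynomials all vector polynomials
of height `< h + n·l`), then for every `l ≥ 1` the Gram–Schmidt vector produced at step
`h + 1 + n·l` also has zero norm. -/
theorem gram_schmidt_null_propagates (n : ℕ) (M : MatMeasureForm n) (h l : ℕ) (hl : 1 ≤ l)
    (q : Fin n → Polynomial ℂ) (hq0 : q ≠ 0) (hqnull : M.B q q = 0)
    (hqh : height q = (h : WithBot ℕ))
    (Mn : ℕ) (p : Fin Mn → (Fin n → Polynomial ℂ))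
    (horth : ∀ i j, M.B (p i) (p j) = if i = j then 1 else 0)
    (hph : ∀ i, height (p i) < ((h + n * l : ℕ) : WithBot ℕ))
    (hspan : ∀ r : Fin n → Polynomial ℂ, height r < ((h + n * l : ℕ) : WithBot ℕ) →
      ∃ (c : Fin Mn → ℂ) (u : Fin n → Polynomial ℂ),
        M.B u u = 0 ∧ r = (∑ i, c i • p i) + u) :
    M.B (eVP n (h + n * l) - ∑ i, M.B (p i) (eVP n (h + n * l)) • p i)
        (eVP n (h + n * l) - ∑ i, M.B (p i) (eVP n (h + n * l)) • p i) = 0 := by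

  classical
  rcases Nat.eq_zero_or_pos n with hn0 | hn
  · subst hn0
    simp [height] at hqh
  have hmap : ∀ (f : ℕ → ℕ) (a : ℕ),
      WithBot.map f ((a : ℕ) : WithBot ℕ) = ((f a : ℕ) : WithBot ℕ) := by
    intro f a
    rw [Nat.cast_withBot, Nat.cast_withBot]
    exact WithBot.map_coe f a
  have hqh' : Finset.univ.sup
      (fun j : Fin n => WithBot.map (fun d => n * d + (j : ℕ)) (q j).degree)
      = (h : WithBot ℕ) := hqh
  haveI : Nonempty (Fin n) := ⟨⟨0, hn⟩⟩
  obtain ⟨j0, -, hj0⟩ := Finset.exists_mem_eq_sup (Finset.univ : Finset (Fin n))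
    Finset.univ_nonempty
    (fun j : Fin n => WithBot.map (fun d => n * d + (j : ℕ)) (q j).degree)
  have hj0' : WithBot.map (fun d => n * d + (j0 : ℕ)) (q j0).degree = (h : WithBot ℕ) := by
    rw [← hj0, hqh']
  obtain ⟨k, hk⟩ : ∃ k : ℕ, (q j0).degree = (k : WithBot ℕ) := by
    cases hdeg : (q j0).degree with
    | bot => rw [hdeg] at hj0'; simp at hj0'
    | coe k => exact ⟨k, by rw [Nat.cast_withBot]⟩
  rw [hk, hmap] at hj0'
  have hkh : n * k + (j0 : ℕ) = h := by exact_mod_cast hj0'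
  have harith : h + n * l = n * (k + l) + (j0 : ℕ) := by
    rw [Nat.mul_add]; linarith [hkh]
  have hmod : (h + n * l) % n = (j0 : ℕ) := by
    rw [harith, Nat.mul_add_mod, Nat.mod_eq_of_lt j0.isLt]
  have hdiv : (h + n * l) / n = k + l := by
    rw [harith, Nat.mul_add_div hn, Nat.div_eq_of_lt j0.isLt, Nat.add_zero]
  have hmn : h % n = (j0 : ℕ) := by
    rw [← hkh, Nat.mul_add_mod, Nat.mod_eq_of_lt j0.isLt]
  have hq0j0 : q j0 ≠ 0 := fun h0 => by simp [h0, degree_zero] at hk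
  set c : ℂ := (q j0).leadingCoeff with hcdef
  have hc : c ≠ 0 := leadingCoeff_ne_zero.mpr hq0j0
  set α : ℂ := c⁻¹ with hαdef
  have hα : α ≠ 0 := inv_ne_zero hc
  set g : Fin n → Polynomial ℂ := fun j => X ^ l * q j with hgdef
  set w : Fin n → Polynomial ℂ := eVP n (h + n * l) - α • g with hwdef
  -- height bound on w
  have hw : height w < ((h + n * l : ℕ) : WithBot ℕ) := by
    rw [show height w = Finset.univ.sup
        (fun j : Fin n => WithBot.map (fun d => n * d + (j : ℕ)) (w j).degree) from rfl,
      Finset.sup_lt_iff (WithBot.bot_lt_coe _)]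
    intro j _
    by_cases hj : j = j0
    · have hwj : w j = X ^ (k + l) - C α * (X ^ l * q j) := by
        simp [hwdef, hj, eVP, hmod, hdiv, Pi.sub_apply, Pi.smul_apply, smul_eq_C_mul, hgdef]
      have hkj : (q j).degree = (k : WithBot ℕ) := by rw [hj, hk]
      have hqj : q j ≠ 0 := by rw [hj]; exact hq0j0
      have hdegr : (C α * (X ^ l * q j)).degree = ((k + l : ℕ) : WithBot ℕ) := by
        rw [degree_mul, degree_mul, degree_C hα, degree_X_pow, hkj, zero_add,
          ← Nat.cast_add, Nat.add_comm]
      have hlc : (X ^ (k + l) : Polynomial ℂ).leadingCoeff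
          = (C α * (X ^ l * q j)).leadingCoeff := by
        rw [leadingCoeff_X_pow, leadingCoeff_mul, leadingCoeff_mul, leadingCoeff_C,
          leadingCoeff_X_pow, one_mul, hj, ← hcdef, hαdef]
        field_simp
      have hdlt : (w j).degree < ((k + l : ℕ) : WithBot ℕ) := by
        rw [hwj]
        have := degree_sub_lt (by rw [degree_X_pow, hdegr])
          (pow_ne_zero _ (X_ne_zero : (X : Polynomial ℂ) ≠ 0)) hlc
        rwa [degree_X_pow] at this
      cases hdeg : (w j).degree with
      | bot => rw [WithBot.map_bot]; exact WithBot.bot_lt_coe _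
      | coe d =>
        rw [← Nat.cast_withBot] at hdeg
        rw [hdeg] at hdlt
        have hdlt' : d < k + l := by exact_mod_cast hdlt
        rw [← Nat.cast_withBot, hmap]
        have : n * d + (j : ℕ) < h + n * l := by
          calc n * d + (j : ℕ) < n * d + n := by omega
            _ = n * (d + 1) := by ring
            _ ≤ n * (k + l) := Nat.mul_le_mul_left _ (by omega)
            _ ≤ h + n * l := le_trans (Nat.le_add_right _ _) (le_of_eq harith.symm)
        exact_mod_cast this
    · have hne' : (j : ℕ) ≠ (h + n * l) % n := by
        rw [hmod]; exact fun hh => hj (Fin.ext hh)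
      have hne'' : ¬ (j : ℕ) = h % n := by
        rw [hmn]; exact fun hh => hj (Fin.ext hh)
      have hwj : w j = -(C α * (X ^ l * q j)) := by
        simp [hwdef, eVP, hne', hne'', Pi.sub_apply, Pi.smul_apply, smul_eq_C_mul, hgdef]
      by_cases hq0j : q j = 0
      · rw [hwj, hq0j, mul_zero, mul_zero, neg_zero, degree_zero, WithBot.map_bot]
        exact WithBot.bot_lt_coe _
      · obtain ⟨d, hd⟩ : ∃ d : ℕ, (q j).degree = (d : WithBot ℕ) :=
          ⟨(q j).natDegree, degree_eq_natDegree hq0j⟩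
        have hle : WithBot.map (fun d => n * d + (j : ℕ)) (q j).degree ≤ (h : WithBot ℕ) := by
          rw [← hqh']
          exact Finset.le_sup (f := fun j : Fin n =>
            WithBot.map (fun d => n * d + (j : ℕ)) (q j).degree) (Finset.mem_univ j)
        rw [hd, hmap] at hle
        have hle' : n * d + (j : ℕ) ≤ h := by exact_mod_cast hle
        have hneh : n * d + (j : ℕ) ≠ h := by
          intro he
          apply hj; apply Fin.ext
          have h1 : (n * d + (j : ℕ)) % n = (j : ℕ) := by
            rw [Nat.mul_add_mod, Nat.mod_eq_of_lt j.isLt]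
          have h2 : h % n = (j0 : ℕ) := by
            rw [← hkh, Nat.mul_add_mod, Nat.mod_eq_of_lt j0.isLt]
          rw [he, h2] at h1
          exact h1.symm
        have hlth : n * d + (j : ℕ) < h := lt_of_le_of_ne hle' hneh
        have hdegw : (w j).degree = ((l + d : ℕ) : WithBot ℕ) := by
          rw [hwj, degree_neg, degree_mul, degree_mul, degree_C hα, degree_X_pow, hd,
            zero_add, ← Nat.cast_add]
        rw [hdegw, hmap]
        have : n * (l + d) + (j : ℕ) < h + n * l := by
          have hexp : n * (l + d) = n * l + n * d := by ring
          rw [hexp]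
          linarith
        exact_mod_cast this
  -- the Gram-Schmidt vector
  set s₀ : Fin n → Polynomial ℂ := eVP n (h + n * l) with hs₀def
  set v : Fin n → Polynomial ℂ := s₀ - ∑ i, M.B (p i) s₀ • p i with hvdef
  show M.B v v = 0
  have hvp : ∀ i, M.B v (p i) = 0 := by
    intro i
    rw [M.conj_symm]
    have hz : M.B (p i) v = 0 := by
      rw [hvdef, M.B_sub_right, M.B_sum_right]
      have he : ∀ j, M.B (p i) (M.B (p j) s₀ • p j)
          = M.B (p j) s₀ * (if i = j then 1 else 0) := fun j => by
        rw [M.smul_right, horth]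
      rw [Finset.sum_congr rfl (fun j _ => he j)]
      simp
    rw [hz, map_zero]
  obtain ⟨dd, u, hu0, hwdec⟩ := hspan w hw
  have hvw : M.B v w = 0 := by
    rw [hwdec, M.add_right, M.B_sum_right, M.B_null_right u hu0]
    have he : ∀ j, M.B v (dd j • p j) = 0 := fun j => by
      rw [M.smul_right, hvp]; ring
    rw [Finset.sum_congr rfl (fun j _ => he j)]
    simp
  have hvg : M.B v g = 0 := by
    calc M.B v g = M.B (fun j => X ^ l * v j) q := (M.B_pow_symm l v q).symm
      _ = 0 := M.B_null_right q hqnull _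
  have hs : s₀ = α • g + w := by
    rw [hwdef]; abel
  have hvs : M.B v s₀ = 0 := by
    rw [hs, M.add_right, M.smul_right, hvg, hvw]; ring
  nth_rewrite 2 [hvdef]
  rw [M.B_sub_right, hvs, M.B_sum_right]
  have he2 : ∀ j, M.B v (M.B (p j) s₀ • p j) = 0 := fun j => by
    rw [M.smul_right, hvp j, mul_zero]
  rw [Finset.sum_congr rfl (fun j _ => he2 j)]
  simp
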